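/- Let η = N(m, V) be a nondegenerate Gaussian measure on ℝ^d with mean m and positive-definite covariance V. Then η is (2, 1.78²·V)-exponentially controlled; that is, inf_{θ'} log ∫ exp(‖(1.78²·V)^{-1/2}(θ − θ')‖₂²) η(dθ) ≤ d/2. -/

import Mathlib

open MeasureTheory ENNReal Matrix

noncomputable section

/-- The Euclidean (ℓ²) norm of a vector in ℝ^d. -/
def euclNorm {d : ℕ} (v : Fin d → ℝ) : ℝ := Real.sqrt (∑ i, v i ^ 2)

/-- The inverse square root `Σ^{-1/2}` of a positive-definite matrix `Σ`. -/
def invSqrt {d : ℕ} (S : Matrix (Fin d) (Fin d) ℝ) (hS : S.PosDef) :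
    Matrix (Fin d) (Fin d) ℝ :=
  (hS.posSemidef.1.eigenvectorUnitary *
    diagonal (fun i => Real.sqrt (hS.posSemidef.1.eigenvalues i)) *
    (star hS.posSemidef.1.eigenvectorUnitary : Matrix (Fin d) (Fin d) ℝ))⁻¹

/-- A measure `η` on ℝ^d is `(p, Σ)`-exponentially controlled if
`inf_{θ'} log ∫ exp(‖Σ^{-1/2}(θ - θ')‖₂^p) η(dθ) ≤ d/2`. -/
def ExpControlled {d : ℕ} (p : ℝ) (S : Matrix (Fin d) (Fin d) ℝ) (hS : S.PosDef)
    (η : Measure (Fin d → ℝ)) : Prop :=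
  ⨅ θ' : Fin d → ℝ,
    ENNReal.log (∫⁻ θ,
      ENNReal.ofReal (Real.exp (euclNorm ((invSqrt S hS).mulVec (θ - θ')) ^ p)) ∂η)
    ≤ ((d : ℝ) / 2 : EReal)

/-- The (nondegenerate) Gaussian measure `N(m, V)` on ℝ^d, defined by its Lebesgue density
`θ ↦ ((2π)^d det V)^{-1/2} exp(-(θ-m)ᵀ V⁻¹ (θ-m) / 2)`. -/
def gaussianMeasure {d : ℕ} (m : Fin d → ℝ) (V : Matrix (Fin d) (Fin d) ℝ) :
    Measure (Fin d → ℝ) :=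
  volume.withDensity fun θ =>
    ENNReal.ofReal ((Real.sqrt ((2 * Real.pi) ^ d * V.det))⁻¹ *
      Real.exp (-((θ - m) ⬝ᵥ V⁻¹.mulVec (θ - m)) / 2))

namespace Matrix.PosSemidef

/-- Square root of a positive semidefinite real matrix via its spectral decomposition. -/
def sqrt {d : ℕ} {V : Matrix (Fin d) (Fin d) ℝ} (hV : V.PosSemidef) : Matrix (Fin d) (Fin d) ℝ :=
  hV.1.eigenvectorUnitary * diagonal (fun i => Real.sqrt (hV.1.eigenvalues i)) *
    (star hV.1.eigenvectorUnitary : Matrix (Fin d) (Fin d) ℝ)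

lemma posSemidef_sqrt {d : ℕ} {V : Matrix (Fin d) (Fin d) ℝ} (hV : V.PosSemidef) :
    hV.sqrt.PosSemidef := by
  have h := (PosSemidef.diagonal (R := ℝ) (d := fun i => Real.sqrt (hV.1.eigenvalues i))
    (fun i => Real.sqrt_nonneg _)).mul_mul_conjTranspose_same
    (hV.1.eigenvectorUnitary : Matrix (Fin d) (Fin d) ℝ)
  unfold sqrt
  rwa [star_eq_conjTranspose]

lemma sqrt_mul_self {d : ℕ} {V : Matrix (Fin d) (Fin d) ℝ} (hV : V.PosSemidef) :
    hV.sqrt * hV.sqrt = V := by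
  have hs := hV.1.spectral_theorem
  rw [Unitary.conjStarAlgAut_apply] at hs
  have hu : (star hV.1.eigenvectorUnitary : Matrix (Fin d) (Fin d) ℝ) *
      hV.1.eigenvectorUnitary = 1 := Unitary.coe_star_mul_self _
  unfold sqrt
  conv_rhs => rw [hs]
  rw [show ∀ A B C D E F : Matrix (Fin d) (Fin d) ℝ, A * B * C * (D * E * F) = A * (B * (C * D) * E) * F
    from fun A B C D E F => by simp only [Matrix.mul_assoc], hu, Matrix.mul_one,
    diagonal_mul_diagonal]
  congr 3
  funext i
  exact Real.mul_self_sqrt (hV.eigenvalues_nonneg i)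

end Matrix.PosSemidef

lemma invSqrt_eq {d : ℕ} (S : Matrix (Fin d) (Fin d) ℝ) (hS : S.PosDef) :
    invSqrt S hS = hS.posSemidef.sqrt⁻¹ := rfl

variable {d' : ℕ}

lemma continuous_quad (M : Matrix (Fin d) (Fin d) ℝ) :
    Continuous fun x : Fin d → ℝ => x ⬝ᵥ M *ᵥ x := by
  simp only [dotProduct, Matrix.mulVec]
  exact continuous_finset_sum _ fun i _ =>
    (continuous_apply i).mul (continuous_finset_sum _ fun j _ =>
      continuous_const.mul (continuous_apply j))

lemma sqrt_transpose (V : Matrix (Fin d) (Fin d) ℝ) (hV : V.PosSemidef) :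
    hV.sqrtᵀ = hV.sqrt := by
  have h := hV.posSemidef_sqrt.isHermitian.eq
  rwa [Matrix.conjTranspose_eq_transpose_of_trivial] at h

lemma sqrt_det_isUnit (V : Matrix (Fin d) (Fin d) ℝ) (hV : V.PosDef) :
    IsUnit hV.posSemidef.sqrt.det := by
  have h : hV.posSemidef.sqrt.det * hV.posSemidef.sqrt.det = V.det := by
    rw [← Matrix.det_mul, hV.posSemidef.sqrt_mul_self]
  have hd := hV.det_pos
  refine isUnit_iff_ne_zero.mpr fun h0 => ?_
  rw [h0, mul_zero] at h
  exact hd.ne h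

lemma quad_sqrt (V : Matrix (Fin d) (Fin d) ℝ) (hV : V.PosDef) (y : Fin d → ℝ) :
    (hV.posSemidef.sqrt *ᵥ y) ⬝ᵥ V⁻¹ *ᵥ (hV.posSemidef.sqrt *ᵥ y) = ∑ i, y i ^ 2 := by
  set B := hV.posSemidef.sqrt with hB
  have hBt : Bᵀ = B := sqrt_transpose V hV.posSemidef
  have hU : IsUnit B.det := sqrt_det_isUnit V hV
  have hkey : B * (V⁻¹ * B) = 1 := by
    rw [← hV.posSemidef.sqrt_mul_self, ← hB, Matrix.mul_inv_rev, Matrix.mul_assoc,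
      Matrix.nonsing_inv_mul B hU, Matrix.mul_one, Matrix.mul_nonsing_inv B hU]
  have h1 : B *ᵥ y = y ᵥ* B := by rw [← hBt, Matrix.mulVec_transpose, hBt]
  rw [Matrix.mulVec_mulVec, Matrix.dotProduct_mulVec, h1, Matrix.vecMul_vecMul, hkey,
    Matrix.vecMul_one]
  simp [dotProduct, pow_two]

lemma quad_inv (S : Matrix (Fin d) (Fin d) ℝ) (hS : S.PosDef) (x : Fin d → ℝ) :
    euclNorm ((invSqrt S hS) *ᵥ x) ^ 2 = x ⬝ᵥ S⁻¹ *ᵥ x := by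
  set A := invSqrt S hS with hA
  have hnn : (0:ℝ) ≤ ∑ i, (A *ᵥ x) i ^ 2 := Finset.sum_nonneg fun i _ => sq_nonneg _
  have hAt : Aᵀ = A := by
    rw [hA, invSqrt_eq, Matrix.transpose_nonsing_inv, sqrt_transpose S hS.posSemidef]
  have hAA : A * A = S⁻¹ := by
    rw [hA, invSqrt_eq, ← Matrix.mul_inv_rev, hS.posSemidef.sqrt_mul_self]
  have h1 : A *ᵥ x = x ᵥ* A := by rw [← hAt, Matrix.mulVec_transpose, hAt]
  rw [euclNorm, Real.sq_sqrt hnn]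
  have : ∑ i, (A *ᵥ x) i ^ 2 = (A *ᵥ x) ⬝ᵥ (A *ᵥ x) := by
    simp [dotProduct, pow_two]
  rw [this]
  nth_rewrite 1 [h1]
  rw [Matrix.dotProduct_mulVec, Matrix.vecMul_vecMul, hAA, ← Matrix.dotProduct_mulVec]

lemma gauss_int (V : Matrix (Fin d) (Fin d) ℝ) (hV : V.PosDef) {α : ℝ} (hα : 0 < α) :
    Integrable (fun x : Fin d → ℝ => Real.exp (-α * (x ⬝ᵥ V⁻¹ *ᵥ x))) ∧
    ∫ x : Fin d → ℝ, Real.exp (-α * (x ⬝ᵥ V⁻¹ *ᵥ x)) = Real.sqrt V.det * Real.sqrt (Real.pi / α) ^ d := by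
  classical
  set B := hV.posSemidef.sqrt with hB
  have hU : IsUnit B.det := sqrt_det_isUnit V hV
  have hdet0 : B.det ≠ 0 := by
    intro h; exact (isUnit_iff_ne_zero.mp hU) h
  have hdetsq : B.det * B.det = V.det := by
    rw [← Matrix.det_mul, hV.posSemidef.sqrt_mul_self]
  have habs : |B.det| = Real.sqrt V.det := by
    rw [← hdetsq, ← pow_two, Real.sqrt_sq_eq_abs]
  set f : (Fin d → ℝ) → ℝ := fun x => Real.exp (-α * (x ⬝ᵥ V⁻¹ *ᵥ x)) with hf
  have hfc : Continuous f := Real.continuous_exp.comp (continuous_const.mul (continuous_quad V⁻¹))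
  set T : (Fin d → ℝ) →ₗ[ℝ] (Fin d → ℝ) := Matrix.toLin' B with hT
  have hTc : Continuous T := LinearMap.continuous_on_pi T
  have hmap : Measure.map T volume = ENNReal.ofReal |B.det|⁻¹ • volume := by
    have := Real.map_matrix_volume_pi_eq_smul_volume_pi hdet0
    rwa [abs_inv] at this
  have hcomp : ∀ y : Fin d → ℝ, f (T y) = ∏ i, Real.exp (-α * y i ^ 2) := by
    intro y
    rw [hf]
    simp only [hT, Matrix.toLin'_apply]
    rw [quad_sqrt V hV y, ← Real.exp_sum]
    congr 1
    rw [Finset.mul_sum]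
  have h1d : Integrable (fun t : ℝ => Real.exp (-α * t ^ 2)) := integrable_exp_neg_mul_sq hα
  have hprod : Integrable (fun y : Fin d → ℝ => ∏ i, Real.exp (-α * y i ^ 2)) :=
    Integrable.fintype_prod fun _ => h1d
  have hfT : Integrable (f ∘ T) := by
    refine hprod.congr (Filter.Eventually.of_forall fun y => ?_)
    exact (hcomp y).symm
  have hintT : Integrable f (Measure.map T volume) := by
    rw [integrable_map_measure hfc.aestronglyMeasurable hTc.measurable.aemeasurable]
    exact hfT
  have hc0 : ENNReal.ofReal |B.det|⁻¹ ≠ 0 := by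
    simp [ENNReal.ofReal_eq_zero, not_le, inv_pos, abs_pos, hdet0]
  have hint : Integrable f := by
    rw [hmap] at hintT
    exact (integrable_smul_measure hc0 ENNReal.ofReal_ne_top).mp hintT
  refine ⟨hint, ?_⟩
  have hI : ∫ y, f (T y) = (ENNReal.ofReal |B.det|⁻¹).toReal • ∫ x, f x := by
    rw [← integral_map hTc.measurable.aemeasurable hfc.aestronglyMeasurable, hmap,
      integral_smul_measure]
  have hIT : ∫ y, f (T y) = Real.sqrt (Real.pi / α) ^ d := by
    rw [integral_congr_ae (Filter.Eventually.of_forall hcomp)]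
    rw [MeasureTheory.volume_pi, MeasureTheory.integral_fintype_prod_eq_pow (ι := Fin d) (fun t : ℝ => Real.exp (-α * t ^ 2)),
      integral_gaussian, Fintype.card_fin]
  have htoReal : (ENNReal.ofReal |B.det|⁻¹).toReal = |B.det|⁻¹ := by
    rw [ENNReal.toReal_ofReal (by positivity)]
  have habspos : 0 < |B.det| := abs_pos.mpr hdet0
  have hfinal : Real.sqrt (Real.pi / α) ^ d = |B.det|⁻¹ * ∫ x, f x := by
    rw [← hIT, hI, htoReal, smul_eq_mul]
  rw [← habs, hfinal, ← mul_assoc, mul_inv_cancel₀ habspos.ne', one_mul]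

lemma sqrt_pow' (x : ℝ) (n : ℕ) (hx : 0 ≤ x) :
    Real.sqrt (x ^ n) = Real.sqrt x ^ n := by
  rw [show x ^ n = (Real.sqrt x ^ n) ^ 2 by
      rw [← pow_mul, mul_comm, pow_mul, Real.sq_sqrt hx],
    Real.sqrt_sq (pow_nonneg (Real.sqrt_nonneg x) n)]

theorem gaussian_expControlled_aux {d : ℕ} (m : Fin d → ℝ)
    (V : Matrix (Fin d) (Fin d) ℝ) (hV : V.PosDef)
    (hS : ((1.78 : ℝ) ^ 2 • V).PosDef) :
    ENNReal.log (∫⁻ θ,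
      ENNReal.ofReal (Real.exp (euclNorm ((invSqrt ((1.78 : ℝ) ^ 2 • V) hS).mulVec (θ - m)) ^ (2:ℝ)))
      ∂(gaussianMeasure m V)) ≤ ((d : ℝ) / 2 : EReal) := by
  classical
  have hc2pos : (0:ℝ) < (1.78:ℝ)^2 := by norm_num
  set α : ℝ := 1/2 - 1/(1.78:ℝ)^2 with hαdef
  have hα : 0 < α := by rw [hαdef]; norm_num
  have hUV : IsUnit V.det := isUnit_iff_ne_zero.mpr hV.det_pos.ne'
  have hSinv : (((1.78:ℝ)^2 • V))⁻¹ = ((1.78:ℝ)^2)⁻¹ • V⁻¹ := by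
    apply Matrix.inv_eq_left_inv
    rw [smul_mul_assoc, mul_smul_comm, smul_smul, Matrix.nonsing_inv_mul V hUV,
      inv_mul_cancel₀ hc2pos.ne', one_smul]
  set q : (Fin d → ℝ) → ℝ := fun θ => (θ - m) ⬝ᵥ V⁻¹ *ᵥ (θ - m) with hq
  set Z : ℝ := Real.sqrt ((2 * Real.pi) ^ d * V.det) with hZdef
  have h2pi : (0:ℝ) < 2 * Real.pi := by positivity
  have hZpos : 0 < Z := Real.sqrt_pos.mpr (mul_pos (pow_pos h2pi d) hV.det_pos)
  -- pointwise rewriting of the integrand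
  have hptw : ∀ θ : Fin d → ℝ,
      ENNReal.ofReal (Real.exp (euclNorm ((invSqrt ((1.78:ℝ)^2 • V) hS).mulVec (θ - m)) ^ (2:ℝ)))
      = ENNReal.ofReal (Real.exp (((1.78:ℝ)^2)⁻¹ * q θ)) := by
    intro θ
    rw [Real.rpow_two, quad_inv _ hS, hSinv, Matrix.smul_mulVec,
      dotProduct_smul, smul_eq_mul]
  have hqc : Continuous q := (continuous_quad V⁻¹).comp (continuous_id.sub continuous_const)
  have hρmeas : Measurable fun θ : Fin d → ℝ =>
      ENNReal.ofReal (Z⁻¹ * Real.exp (-(q θ) / 2)) :=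
    ENNReal.measurable_ofReal.comp
      (continuous_const.mul (Real.continuous_exp.comp ((hqc.neg).div_const 2))).measurable
  have hgmeas : Measurable fun θ : Fin d → ℝ =>
      ENNReal.ofReal (Real.exp (((1.78:ℝ)^2)⁻¹ * q θ)) :=
    ENNReal.measurable_ofReal.comp
      (Real.continuous_exp.comp (continuous_const.mul hqc)).measurable
  set f : (Fin d → ℝ) → ℝ := fun x => Real.exp (-α * (x ⬝ᵥ V⁻¹ *ᵥ x)) with hf
  obtain ⟨hfint, hfval⟩ := gauss_int V hV hα
  set r : ℝ := Z⁻¹ * (Real.sqrt V.det * Real.sqrt (Real.pi / α) ^ d) with hrdef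
  have hlint : (∫⁻ θ,
      ENNReal.ofReal (Real.exp (euclNorm ((invSqrt ((1.78:ℝ)^2 • V) hS).mulVec (θ - m)) ^ (2:ℝ)))
      ∂(gaussianMeasure m V)) = ENNReal.ofReal r := by
    rw [lintegral_congr hptw, gaussianMeasure,
      lintegral_withDensity_eq_lintegral_mul volume hρmeas hgmeas]
    have hptw2 : ∀ θ : Fin d → ℝ,
        ((fun θ => ENNReal.ofReal (Z⁻¹ * Real.exp (-(q θ) / 2))) *
          fun θ => ENNReal.ofReal (Real.exp (((1.78:ℝ)^2)⁻¹ * q θ))) θ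
        = ENNReal.ofReal (Z⁻¹ * f (θ - m)) := by
      intro θ
      simp only [Pi.mul_apply]
      rw [← ENNReal.ofReal_mul (by positivity)]
      congr 1
      rw [mul_assoc, ← Real.exp_add, hf]
      congr 2
      rw [hq, hαdef]; ring
    rw [lintegral_congr hptw2]
    have hint2 : Integrable (fun θ : Fin d → ℝ => Z⁻¹ * f (θ - m)) :=
      (hfint.comp_sub_right m).const_mul _
    rw [← ofReal_integral_eq_lintegral_ofReal hint2
      (Filter.Eventually.of_forall fun θ => by positivity)]
    congr 1
    rw [MeasureTheory.integral_const_mul, integral_sub_right_eq_self f m, hfval]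
  rw [hlint]
  have hrpos : 0 < r := by
    rw [hrdef]
    have h1 : 0 < Real.sqrt V.det := Real.sqrt_pos.mpr hV.det_pos
    have h2 : 0 < Real.sqrt (Real.pi / α) := Real.sqrt_pos.mpr (div_pos Real.pi_pos hα)
    positivity
  rw [ENNReal.log_ofReal_of_pos hrpos]
  have hgoal : Real.log r ≤ (d:ℝ)/2 := by
    rw [Real.log_le_iff_le_exp hrpos]
    have hr2 : r = Real.sqrt ((2*α)⁻¹) ^ d := by
      have hZ2 : Z = Real.sqrt (2 * Real.pi) ^ d * Real.sqrt V.det := by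
        rw [hZdef, Real.sqrt_mul (pow_nonneg h2pi.le d), sqrt_pow' _ _ h2pi.le]
      have hs : Real.sqrt (Real.pi / α) / Real.sqrt (2 * Real.pi)
          = Real.sqrt ((2*α)⁻¹) := by
        rw [← Real.sqrt_div (div_pos Real.pi_pos hα).le]
        congr 1
        field_simp
      rw [hrdef, hZ2, ← hs, div_pow]
      have ha0 : Real.sqrt (2 * Real.pi) ≠ 0 := (Real.sqrt_pos.mpr h2pi).ne'
      have hb0 : Real.sqrt V.det ≠ 0 := (Real.sqrt_pos.mpr hV.det_pos).ne'
      field_simp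
    rw [hr2, show (d:ℝ)/2 = d * (1/2) by ring, Real.exp_nat_mul]
    apply pow_le_pow_left₀ (Real.sqrt_nonneg _)
    rw [show (1:ℝ)/2 = 1/2 from rfl, Real.exp_half 1]
    apply Real.sqrt_le_sqrt
    have he := Real.exp_one_gt_d9
    have : ((2*α)⁻¹ : ℝ) ≤ 2.7182818283 := by rw [hαdef]; norm_num
    linarith
  rw [show ((d:ℝ) : EReal) / (2 : EReal) = (((d:ℝ)/2 : ℝ) : EReal) from (EReal.coe_div _ _).symm]
  exact_mod_cast hgoal

/-- a nondegenerate Gaussian measure `N(m, V)` on ℝ^d is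
`(2, 1.78² V)`-exponentially controlled. -/
theorem gaussian_expControlled {d : ℕ} (m : Fin d → ℝ)
    (V : Matrix (Fin d) (Fin d) ℝ) (hV : V.PosDef)
    (hS : ((1.78 : ℝ) ^ 2 • V).PosDef) :
    ExpControlled 2 ((1.78 : ℝ) ^ 2 • V) hS (gaussianMeasure m V) := by
  refine iInf_le_of_le m ?_
  exact gaussian_expControlled_aux m V hV hS
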